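/- For every integer N ≥ 3, the optimizer of the N-cycle SDP is unique: there is exactly one N×N real symmetric positive semidefinite matrix X with unit diagonal such that Σ_{i=1}^{N−1} X_{i,i+1} − X_{N,1} = N·cos(π/N). -/

import Mathlib

/-- Entry of a matrix indexed by naturals (0 outside the range). -/
noncomputable def entry {N : ℕ} (X : Matrix (Fin N) (Fin N) ℝ) (i j : ℕ) : ℝ :=
  if h : i < N ∧ j < N then X ⟨i, h.1⟩ ⟨j, h.2⟩ else 0

/-- The N-cycle objective Σ_{i=1}^{N−1} X_{i,i+1} − X_{N,1} (0-indexed). -/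
noncomputable def cycObj (N : ℕ) (X : Matrix (Fin N) (Fin N) ℝ) : ℝ :=
  (∑ i ∈ Finset.range (N - 1), entry X i (i + 1)) - entry X (N - 1) 0

open Finset Complex Matrix


noncomputable def ee (N k : ℕ) (d : ℤ) : ℂ :=
  Complex.exp ((((2*k+1 : ℝ) * (d : ℝ) * (Real.pi / N)) : ℝ) * Complex.I)

lemma ee_mul (N k : ℕ) (d e : ℤ) : ee N k d * ee N k e = ee N k (d + e) := by
  rw [ee, ee, ee, ← Complex.exp_add]
  congr 1
  push_cast
  ring

lemma conj_ee (N k : ℕ) (d : ℤ) : (starRingEnd ℂ) (ee N k d) = ee N k (-d) := by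
  rw [ee, ← Complex.exp_conj]
  rw [_root_.map_mul, Complex.conj_ofReal, Complex.conj_I]
  rw [show ((((2*k+1 : ℝ) * (d : ℝ) * (Real.pi / N)) : ℝ) : ℂ) * (-Complex.I)
      = ((((2*k+1 : ℝ) * ((-d : ℤ) : ℝ) * (Real.pi / N)) : ℝ) : ℂ) * Complex.I by
    push_cast; ring]
  rfl

lemma ee_re (N k : ℕ) (d : ℤ) : (ee N k d).re = Real.cos ((2*k+1 : ℝ) * (d : ℝ) * (Real.pi / N)) := by
  rw [ee, Complex.exp_ofReal_mul_I_re]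

lemma ee_im (N k : ℕ) (d : ℤ) : (ee N k d).im = Real.sin ((2*k+1 : ℝ) * (d : ℝ) * (Real.pi / N)) := by
  rw [ee, Complex.exp_ofReal_mul_I_im]

lemma ee_last (N : ℕ) (hN : 0 < N) (d : ℤ) : ee N (N-1) d = ee N 0 (-d) := by
  have h1 : Complex.exp ((d:ℂ) * (2*Real.pi*Complex.I)) = 1 := Complex.exp_int_mul_two_pi_mul_I d
  have hNc : (N:ℂ) ≠ 0 := Nat.cast_ne_zero.mpr hN.ne'
  have key : ee N (N-1) d = ee N 0 (-d) * Complex.exp ((d:ℂ) * (2*Real.pi*Complex.I)) := by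
    rw [ee, ee, ← Complex.exp_add]
    congr 1
    have hc : ((N-1 : ℕ) : ℝ) = (N:ℝ) - 1 := by
      rw [Nat.cast_sub hN]; norm_num
    push_cast [hc]
    field_simp
    ring
  rw [key, h1, mul_one]

lemma sum_ee (N : ℕ) (hN : 0 < N) (d : ℤ) (h1 : -(N:ℤ) < d) (h2 : d ≤ N) :
    ∑ k ∈ range N, ee N k d = if d = 0 then (N:ℂ) else if d = (N:ℤ) then -(N:ℂ) else 0 := by
  have hN' : (N:ℝ) ≠ 0 := Nat.cast_ne_zero.mpr hN.ne'
  have hNc : (N:ℂ) ≠ 0 := Nat.cast_ne_zero.mpr hN.ne'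
  have hterm : ∀ k : ℕ, ee N k d
      = Complex.exp ((((d:ℝ) * (Real.pi / N)) : ℝ) * Complex.I)
        * Complex.exp ((((2 * (d:ℝ) * (Real.pi / N))) : ℝ) * Complex.I) ^ k := by
    intro k
    rw [ee, ← Complex.exp_nat_mul, ← Complex.exp_add]
    congr 1
    push_cast
    ring
  simp only [hterm]
  rw [← Finset.mul_sum]
  by_cases hd0 : d = 0
  · subst hd0
    simp
  · by_cases hdN : d = (N:ℤ)
    · subst hdN
      have hr1 : Complex.exp ((((2 * (((N:ℤ)):ℝ) * (Real.pi / N))) : ℝ) * Complex.I) = 1 := by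
        rw [show ((((2 * (((N:ℤ)):ℝ) * (Real.pi / N))) : ℝ) : ℂ) * Complex.I = (1:ℤ) * (2*Real.pi*Complex.I) by
          push_cast; field_simp [hNc]]
        exact Complex.exp_int_mul_two_pi_mul_I 1
      have hf : Complex.exp (((((((N:ℤ)):ℝ)) * (Real.pi / N)) : ℝ) * Complex.I) = -1 := by
        rw [show (((((((N:ℤ)):ℝ)) * (Real.pi / N)) : ℝ) : ℂ) * Complex.I = (Real.pi : ℂ) * Complex.I by
          push_cast; field_simp [hNc]]
        exact Complex.exp_pi_mul_I
      rw [hr1, hf]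
      simp [hd0, hN.ne']
    · set r : ℂ := Complex.exp ((((2 * (d:ℝ) * (Real.pi / N))) : ℝ) * Complex.I) with hrdef
      have hrN : r ^ N = 1 := by
        rw [hrdef, ← Complex.exp_nat_mul]
        rw [show (N:ℂ) * (((((2 * (d:ℝ) * (Real.pi / N))) : ℝ)) * Complex.I) = (d:ℂ) * (2*Real.pi*Complex.I) by
          push_cast; field_simp [hNc]]
        exact Complex.exp_int_mul_two_pi_mul_I d
      have hr1 : r ≠ 1 := by
        intro h
        rw [hrdef, Complex.exp_eq_one_iff] at h
        obtain ⟨m, hm⟩ := h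
        have hR : (2 * (d:ℝ) * (Real.pi / N)) = (m:ℝ) * (2*Real.pi) := by
          have := congrArg Complex.im hm
          simpa using this
        have h0 : 2*Real.pi*(((d:ℝ)) - (m:ℝ)*(N:ℝ)) = 0 := by
          field_simp at hR
          linear_combination (2*Real.pi) * hR
        have hpi : Real.pi ≠ 0 := Real.pi_ne_zero
        have hdm' : (d:ℝ) = (m:ℝ)*(N:ℝ) := by
          rcases mul_eq_zero.mp h0 with h | h
          · exfalso; simp [hpi] at h
          · linarith
        have hdm : d = m * N := by exact_mod_cast hdm'
        rcases lt_trichotomy m 0 with hm0 | hm0 | hm0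
        · have : d ≤ -(N:ℤ) := by
            calc d = m * N := hdm
            _ ≤ (-1) * N := by
              apply mul_le_mul_of_nonneg_right _ (by exact_mod_cast hN.le)
              omega
            _ = -(N:ℤ) := by ring
          omega
        · subst hm0; simp at hdm; omega
        · have hge : (N:ℤ) ≤ d := by
            calc (N:ℤ) = 1 * N := by ring
            _ ≤ m * N := by
              apply mul_le_mul_of_nonneg_right _ (by exact_mod_cast hN.le)
              omega
            _ = d := hdm.symm
          exact hdN (le_antisymm h2 hge)
      rw [geom_sum_eq hr1, hrN]
      simp [hd0, hdN]

lemma ee_zero (N k : ℕ) : ee N k 0 = 1 := by simp [ee]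

noncomputable def cdft (N : ℕ) (x : ℕ → ℝ) (k : ℕ) : ℂ :=
  ∑ j ∈ range N, (x j : ℂ) * ee N k (-(j:ℤ))

lemma conj_cdft (N : ℕ) (x : ℕ → ℝ) (k : ℕ) :
    (starRingEnd ℂ) (cdft N x k) = ∑ j ∈ range N, (x j : ℂ) * ee N k (j:ℤ) := by
  rw [cdft, map_sum]
  refine Finset.sum_congr rfl fun j _ => ?_
  rw [_root_.map_mul, Complex.conj_ofReal, conj_ee, neg_neg]

lemma master (N : ℕ) (hN : 0 < N) (x : ℕ → ℝ) (t : ℕ) (ht : t ≤ 1) :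
    ∑ k ∈ range N, ee N k (t:ℤ) * (cdft N x k * (starRingEnd ℂ) (cdft N x k))
    = ∑ j ∈ range N, ∑ j' ∈ range N, ((x j * x j' : ℝ) : ℂ) *
        (if (j':ℤ) - j + t = 0 then (N:ℂ) else if (j':ℤ) - j + t = N then -(N:ℂ) else 0) := by
  have step1 : ∀ k, ee N k (t:ℤ) * (cdft N x k * (starRingEnd ℂ) (cdft N x k))
      = ∑ j ∈ range N, ∑ j' ∈ range N, ((x j * x j' : ℝ) : ℂ) * ee N k ((j':ℤ) - j + t) := by
    intro k
    rw [conj_cdft, cdft, Finset.sum_mul_sum, Finset.mul_sum]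
    refine Finset.sum_congr rfl fun j _ => ?_
    rw [Finset.mul_sum]
    refine Finset.sum_congr rfl fun j' _ => ?_
    rw [show ee N k (t:ℤ) * ((x j : ℂ) * ee N k (-(j:ℤ)) * ((x j' : ℂ) * ee N k (j':ℤ)))
        = ((x j : ℂ) * (x j' : ℂ)) * (ee N k (t:ℤ) * (ee N k (-(j:ℤ)) * ee N k (j':ℤ))) from by ring]
    rw [ee_mul, ee_mul]
    push_cast
    congr 2
    ring
  simp only [step1]
  rw [Finset.sum_comm]
  refine Finset.sum_congr rfl fun j hj => ?_
  rw [Finset.sum_comm]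
  refine Finset.sum_congr rfl fun j' hj' => ?_
  rw [← Finset.mul_sum, sum_ee N hN _ (by simp at hj hj' ⊢; omega) (by simp at hj hj' ⊢; omega)]

lemma parseval (N : ℕ) (hN : 0 < N) (x : ℕ → ℝ) :
    ∑ k ∈ range N, Complex.normSq (cdft N x k) = N * ∑ j ∈ range N, (x j)^2 := by
  have h := master N hN x 0 (by norm_num)
  simp only [Nat.cast_zero, ee_zero, one_mul, add_zero] at h
  have hc : ∀ j ∈ range N, ∑ j' ∈ range N, ((x j * x j' : ℝ) : ℂ) *
      (if (j':ℤ) - j = 0 then (N:ℂ) else if (j':ℤ) - j = N then -(N:ℂ) else 0)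
      = ((x j)^2 : ℝ) * (N:ℂ) := by
    intro j hj
    simp only [mem_range] at hj
    rw [show ((((x j)^2 : ℝ)) : ℂ) * (N:ℂ) = ∑ j' ∈ range N,
        (if j' = j then ((x j * x j' : ℝ) : ℂ) * (N:ℂ) else 0) from ?_]
    · refine Finset.sum_congr rfl fun j' hj' => ?_
      simp only [mem_range] at hj'
      by_cases hcase : j' = j
      · subst hcase
        simp [pow_two]
      · have h1 : ¬ ((j':ℤ) - j = 0) := by omega
        have h2 : ¬ ((j':ℤ) - j = N) := by omega
        simp [h1, h2, hcase]
    · rw [Finset.sum_ite_eq' (range N) j]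
      simp [mem_range.mpr hj, pow_two]
  rw [Finset.sum_congr rfl hc] at h
  have h2 : ∀ k ∈ range N, cdft N x k * (starRingEnd ℂ) (cdft N x k)
      = ((Complex.normSq (cdft N x k) : ℝ) : ℂ) := fun k _ => Complex.mul_conj _
  rw [Finset.sum_congr rfl h2] at h
  have : ((∑ k ∈ range N, Complex.normSq (cdft N x k) : ℝ) : ℂ)
      = (((N : ℝ) * ∑ j ∈ range N, (x j)^2 : ℝ) : ℂ) := by
    push_cast
    rw [h, ← Finset.sum_mul]
    push_cast
    ring
  exact_mod_cast this

noncomputable def qform (N : ℕ) (x : ℕ → ℝ) : ℝ :=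
  (∑ i ∈ range (N-1), x i * x (i+1)) - x (N-1) * x 0

lemma objC (N : ℕ) (hN : 0 < N) (x : ℕ → ℝ) :
    ∑ k ∈ range N, ee N k 1 * (cdft N x k * (starRingEnd ℂ) (cdft N x k))
    = (N:ℂ) * ((qform N x : ℝ) : ℂ) := by
  have h := master N hN x 1 le_rfl
  simp only [Nat.cast_one] at h
  rw [h]
  have hc : ∀ j ∈ range N, (∑ j' ∈ range N, ((x j * x j' : ℝ) : ℂ) *
      (if (j':ℤ) - j + 1 = 0 then (N:ℂ) else if (j':ℤ) - j + 1 = N then -(N:ℂ) else 0))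
      = if j = 0 then -((x 0 * x (N-1) : ℝ) : ℂ) * N else ((x j * x (j-1) : ℝ) : ℂ) * N := by
    intro j hj
    simp only [mem_range] at hj
    by_cases hj0 : j = 0
    · subst hj0
      rw [if_pos rfl]
      rw [show -((x 0 * x (N-1) : ℝ) : ℂ) * N
          = ∑ j' ∈ range N, (if j' = N-1 then -((x 0 * x (N-1) : ℝ) : ℂ) * N else 0) from ?_]
      · refine Finset.sum_congr rfl fun j' hj' => ?_
        simp only [mem_range] at hj'
        by_cases hcase : j' = N-1
        · subst hcase
          have h1 : ¬(((N-1:ℕ):ℤ) - (0:ℕ) + 1 = 0) := by push_cast; omega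
          have h2 : (((N-1:ℕ):ℤ) - (0:ℕ) + 1 = N) := by push_cast; omega
          rw [if_pos rfl, if_neg h1, if_pos h2]
          ring
        · have h1 : ¬((j':ℤ) - (0:ℕ) + 1 = 0) := by push_cast; omega
          have h2 : ¬((j':ℤ) - (0:ℕ) + 1 = N) := by
            push_cast
            omega
          rw [if_neg hcase, if_neg h1, if_neg h2, mul_zero]
      · rw [Finset.sum_ite_eq' (range N) (N-1)]
        rw [if_pos (mem_range.mpr (by omega))]
    · rw [if_neg hj0]
      rw [show ((x j * x (j-1) : ℝ) : ℂ) * N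
          = ∑ j' ∈ range N, (if j' = j-1 then ((x j * x (j-1) : ℝ) : ℂ) * N else 0) from ?_]
      · refine Finset.sum_congr rfl fun j' hj' => ?_
        simp only [mem_range] at hj'
        by_cases hcase : j' = j-1
        · subst hcase
          have h1 : (((j-1:ℕ):ℤ) - j + 1 = 0) := by push_cast [Nat.cast_sub (by omega : 1 ≤ j)]; omega
          rw [if_pos rfl, if_pos h1]
        · have h1 : ¬((j':ℤ) - j + 1 = 0) := by omega
          have h2 : ¬((j':ℤ) - j + 1 = N) := by omega
          rw [if_neg hcase, if_neg h1, if_neg h2, mul_zero]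
      · rw [Finset.sum_ite_eq' (range N) (j-1)]
        rw [if_pos (mem_range.mpr (by omega))]
  rw [Finset.sum_congr rfl hc]
  obtain ⟨n, rfl⟩ : ∃ n, N = n + 1 := ⟨N-1, by omega⟩
  rw [Finset.sum_range_succ']
  rw [if_pos rfl]
  have hstep : ∀ i ∈ range n, (if i + 1 = 0 then -((x 0 * x (n+1-1) : ℝ) : ℂ) * ((n+1:ℕ):ℂ)
      else ((x (i+1) * x (i+1-1) : ℝ) : ℂ) * ((n+1:ℕ):ℂ))
      = ((n+1:ℕ):ℂ) * (((x i * x (i+1) : ℝ)) : ℂ) := by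
    intro i _
    rw [if_neg (Nat.succ_ne_zero i)]
    simp only [Nat.add_sub_cancel]
    push_cast
    ring
  rw [Finset.sum_congr rfl hstep, ← Finset.mul_sum]
  rw [qform]
  simp only [Nat.add_sub_cancel]
  push_cast
  ring

lemma obj_re (N : ℕ) (hN : 0 < N) (x : ℕ → ℝ) :
    ∑ k ∈ range N, Real.cos ((2*k+1 : ℝ) * (Real.pi / N)) * Complex.normSq (cdft N x k)
    = N * qform N x := by
  have h := congrArg Complex.re (objC N hN x)
  have hterm : ∀ k ∈ range N, (ee N k 1 * (cdft N x k * (starRingEnd ℂ) (cdft N x k))).re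
      = Real.cos ((2*k+1 : ℝ) * (Real.pi / N)) * Complex.normSq (cdft N x k) := by
    intro k _
    rw [Complex.mul_conj, Complex.mul_re]
    simp only [Complex.ofReal_re, Complex.ofReal_im, mul_zero, sub_zero]
    rw [ee_re]
    norm_num
  rw [Complex.re_sum] at h
  rw [Finset.sum_congr rfl hterm] at h
  rw [h]
  rw [show ((N:ℂ) * ((qform N x : ℝ):ℂ)) = (((N * qform N x : ℝ)):ℂ) by push_cast; ring]
  exact Complex.ofReal_re _

lemma inversion (N : ℕ) (hN : 0 < N) (x : ℕ → ℝ) (j : ℕ) (hj : j < N) :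
    ∑ k ∈ range N, ee N k (j:ℤ) * cdft N x k = (N:ℂ) * ((x j : ℝ) : ℂ) := by
  have step : ∀ k, ee N k (j:ℤ) * cdft N x k
      = ∑ j' ∈ range N, (x j' : ℂ) * ee N k ((j:ℤ) - j') := by
    intro k
    rw [cdft, Finset.mul_sum]
    refine Finset.sum_congr rfl fun j' _ => ?_
    rw [show ee N k (j:ℤ) * ((x j' : ℂ) * ee N k (-(j':ℤ)))
        = (x j' : ℂ) * (ee N k (j:ℤ) * ee N k (-(j':ℤ))) from by ring, ee_mul]
    congr 1
    try omega
  simp only [step]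
  rw [Finset.sum_comm]
  have hc : ∀ j' ∈ range N, (∑ k ∈ range N, (x j' : ℂ) * ee N k ((j:ℤ) - j'))
      = if j' = j then (x j : ℂ) * N else 0 := by
    intro j' hj'
    simp only [mem_range] at hj'
    rw [← Finset.mul_sum, sum_ee N hN _ (by omega) (by omega)]
    by_cases hcase : j' = j
    · subst hcase
      rw [if_pos (by omega), if_pos rfl]
    · rw [if_neg (by omega), if_neg (by omega), mul_zero, if_neg hcase]
  rw [Finset.sum_congr rfl hc, Finset.sum_ite_eq' (range N) j, if_pos (mem_range.mpr hj)]
  ring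

lemma cos_le_cos_theta (N k : ℕ) (hN : 3 ≤ N) (hk : k < N) :
    Real.cos ((2*k+1 : ℝ) * (Real.pi / N)) ≤ Real.cos (Real.pi / N) := by
  have hpi := Real.pi_pos
  have hθ : 0 < Real.pi / N := by positivity
  have hNθ : (N:ℝ) * (Real.pi / N) = Real.pi := by
    field_simp
  set a := (2*k+1 : ℝ) * (Real.pi / N) with ha
  have ha1 : Real.pi / N ≤ a := by
    rw [ha]
    nlinarith [hθ, (by positivity : (0:ℝ) ≤ (k:ℝ))]
  have ha2 : a ≤ 2*Real.pi - Real.pi / N := by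
    rw [ha]
    have hkr : (k:ℝ) ≤ (N:ℝ) - 1 := by
      have : (k:ℝ) + 1 ≤ N := by exact_mod_cast hk
      linarith
    nlinarith [hθ]
  by_cases hcase : a ≤ Real.pi
  · exact Real.cos_le_cos_of_nonneg_of_le_pi hθ.le hcase ha1
  · push_neg at hcase
    rw [← Real.cos_two_pi_sub a]
    apply Real.cos_le_cos_of_nonneg_of_le_pi hθ.le (by linarith) (by linarith)

lemma cos_lt_cos_theta (N k : ℕ) (hN : 3 ≤ N) (hk1 : 1 ≤ k) (hk2 : k ≤ N-2) :
    Real.cos ((2*k+1 : ℝ) * (Real.pi / N)) < Real.cos (Real.pi / N) := by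
  have hpi := Real.pi_pos
  have hθ : 0 < Real.pi / N := by positivity
  set a := (2*k+1 : ℝ) * (Real.pi / N) with ha
  have ha1 : 3 * (Real.pi / N) ≤ a := by
    rw [ha]
    have : (1:ℝ) ≤ k := by exact_mod_cast hk1
    nlinarith [hθ]
  have ha2 : a ≤ 2*Real.pi - 3 * (Real.pi / N) := by
    rw [ha]
    have hkr : (k:ℝ) ≤ (N:ℝ) - 2 := by
      have h' : (k:ℝ) + 2 ≤ N := by exact_mod_cast (by omega : k + 2 ≤ N)
      linarith
    have hNθ : (N:ℝ) * (Real.pi / N) = Real.pi := by field_simp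
    nlinarith [hθ]
  have h3 : Real.pi / N < 3 * (Real.pi / N) := by linarith
  by_cases hcase : a ≤ Real.pi
  · apply Real.strictAntiOn_cos ⟨hθ.le, ?_⟩ ⟨by positivity, hcase⟩ (by linarith)
    · linarith [Real.pi_pos]
    -- pi/N ≤ pi
  · push_neg at hcase
    rw [← Real.cos_two_pi_sub a]
    apply Real.strictAntiOn_cos ⟨hθ.le, ?_⟩ ⟨by linarith, by linarith⟩ (by linarith)
    linarith

lemma key_ineq (N : ℕ) (hN : 3 ≤ N) (x : ℕ → ℝ) :
    qform N x ≤ Real.cos (Real.pi / N) * ∑ j ∈ range N, (x j)^2 := by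
  have hN0 : 0 < N := by omega
  have hp := parseval N hN0 x
  have ho := obj_re N hN0 x
  have hle : ∑ k ∈ range N, Real.cos ((2*k+1 : ℝ) * (Real.pi / N)) * Complex.normSq (cdft N x k)
      ≤ ∑ k ∈ range N, Real.cos (Real.pi / N) * Complex.normSq (cdft N x k) := by
    apply Finset.sum_le_sum
    intro k hk
    exact mul_le_mul_of_nonneg_right (cos_le_cos_theta N k hN (mem_range.mp hk)) (Complex.normSq_nonneg _)
  rw [ho, ← Finset.mul_sum, hp] at hle
  have hNpos : (0:ℝ) < N := by exact_mod_cast hN0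
  nlinarith [hle]

lemma eq_case (N : ℕ) (hN : 3 ≤ N) (x : ℕ → ℝ)
    (heq : qform N x = Real.cos (Real.pi / N) * ∑ j ∈ range N, (x j)^2) :
    ∃ A B : ℝ, ∀ j < N, x j = A * Real.cos (j * (Real.pi / N)) + B * Real.sin (j * (Real.pi / N)) := by
  have hN0 : 0 < N := by omega
  have hp := parseval N hN0 x
  have ho := obj_re N hN0 x
  have hsum0 : ∑ k ∈ range N,
      (Real.cos (Real.pi / N) - Real.cos ((2*k+1 : ℝ) * (Real.pi / N))) * Complex.normSq (cdft N x k) = 0 := by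
    have : ∑ k ∈ range N,
        (Real.cos (Real.pi / N) - Real.cos ((2*k+1 : ℝ) * (Real.pi / N))) * Complex.normSq (cdft N x k)
        = Real.cos (Real.pi / N) * (∑ k ∈ range N, Complex.normSq (cdft N x k))
          - ∑ k ∈ range N, Real.cos ((2*k+1 : ℝ) * (Real.pi / N)) * Complex.normSq (cdft N x k) := by
      rw [Finset.mul_sum, ← Finset.sum_sub_distrib]
      refine Finset.sum_congr rfl fun k _ => ?_
      ring
    rw [this, hp, ho, heq]
    ring
  have hzero := (Finset.sum_eq_zero_iff_of_nonneg ?_).mp hsum0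
  swap
  · intro k hk
    have := cos_le_cos_theta N k hN (mem_range.mp hk)
    have := Complex.normSq_nonneg (cdft N x k)
    nlinarith
  have hc0 : ∀ k, 1 ≤ k → k ≤ N-2 → cdft N x k = 0 := by
    intro k h1 h2
    have hk : k ∈ range N := mem_range.mpr (by omega)
    have h := hzero k hk
    have hlt := cos_lt_cos_theta N k hN h1 h2
    rcases mul_eq_zero.mp h with h' | h'
    · exfalso; nlinarith
    · exact Complex.normSq_eq_zero.mp h'
  refine ⟨((cdft N x 0).re + (cdft N x (N-1)).re)/N, ((cdft N x (N-1)).im - (cdft N x 0).im)/N, ?_⟩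
  intro j hj
  have hinv := inversion N hN0 x j hj
  have hsplit : ∑ k ∈ range N, ee N k (j:ℤ) * cdft N x k
      = ∑ k ∈ ({0, N-1} : Finset ℕ), ee N k (j:ℤ) * cdft N x k := by
    symm
    apply Finset.sum_subset
    · intro k hk
      simp only [Finset.mem_insert, Finset.mem_singleton] at hk
      rcases hk with rfl | rfl <;> exact mem_range.mpr (by omega)
    · intro k hk hk'
      simp only [Finset.mem_insert, Finset.mem_singleton] at hk'
      push_neg at hk'
      have hkN : k < N := mem_range.mp hk
      rw [hc0 k (by omega) (by omega), mul_zero]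
  rw [hsplit, Finset.sum_pair (by omega : (0:ℕ) ≠ N-1)] at hinv
  rw [ee_last N hN0] at hinv
  have hre := congrArg Complex.re hinv
  simp only [Complex.add_re, Complex.mul_re, ee_re, ee_im, Complex.ofReal_re, Complex.ofReal_im,
    mul_zero, sub_zero] at hre
  push_cast at hre
  rw [show ((2*0+1:ℝ)) * (j:ℝ) * (Real.pi/N) = (j:ℝ)*(Real.pi/N) by ring,
      show ((2*0+1:ℝ)) * -(j:ℝ) * (Real.pi/N) = -((j:ℝ)*(Real.pi/N)) by ring,
      Real.cos_neg, Real.sin_neg, Complex.natCast_re] at hre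
  have hNne : (N:ℝ) ≠ 0 := by positivity
  field_simp
  ring_nf at hre ⊢
  linarith [hre]

lemma entry_eq {N : ℕ} (X : Matrix (Fin N) (Fin N) ℝ) (i j : ℕ) (h1 : i < N) (h2 : j < N) :
    entry X i j = X ⟨i, h1⟩ ⟨j, h2⟩ := dif_pos ⟨h1, h2⟩

noncomputable def Ymat (N : ℕ) : Matrix (Fin N) (Fin N) ℝ := Matrix.of fun i j =>
  Real.cos ((i:ℕ) * (Real.pi/N)) * Real.cos ((j:ℕ) * (Real.pi/N))
    + Real.sin ((i:ℕ) * (Real.pi/N)) * Real.sin ((j:ℕ) * (Real.pi/N))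

lemma Ymat_posSemidef (N : ℕ) : (Ymat N).PosSemidef := by
  let B : Matrix (Fin 2) (Fin N) ℝ := Matrix.of fun (k : Fin 2) (j : Fin N) =>
      if k = 0 then Real.cos ((j:ℕ) * (Real.pi/N)) else Real.sin ((j:ℕ) * (Real.pi/N))
  have : Ymat N = Bᴴ * B := by
    ext i j
    simp [B, Matrix.mul_apply, Matrix.conjTranspose_apply, Fin.sum_univ_two, Ymat]
  rw [this]
  exact Matrix.posSemidef_conjTranspose_mul_self _

lemma Ymat_diag (N : ℕ) (i : Fin N) : Ymat N i i = 1 := by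
  simp [Ymat]
  rw [← Real.sin_sq_add_cos_sq ((i:ℕ) * (Real.pi/N))]
  ring

lemma Ymat_obj (N : ℕ) (hN : 3 ≤ N) : cycObj N (Ymat N) = (N : ℝ) * Real.cos (Real.pi / N) := by
  have hN0 : 0 < N := by omega
  have hNne : (N:ℝ) ≠ 0 := by positivity
  rw [cycObj]
  have h1 : ∀ i ∈ range (N-1), entry (Ymat N) i (i+1) = Real.cos (Real.pi / N) := by
    intro i hi
    simp only [mem_range] at hi
    rw [entry_eq _ _ _ (by omega) (by omega)]
    show Real.cos ((i:ℝ) * (Real.pi/N)) * Real.cos (((i+1:ℕ):ℝ) * (Real.pi/N))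
      + Real.sin ((i:ℝ) * (Real.pi/N)) * Real.sin (((i+1:ℕ):ℝ) * (Real.pi/N)) = _
    rw [← Real.cos_sub]
    push_cast
    rw [show (i:ℝ) * (Real.pi/N) - ((i:ℝ)+1) * (Real.pi/N) = -(Real.pi/N) by ring, Real.cos_neg]
  rw [Finset.sum_congr rfl h1, Finset.sum_const, card_range]
  have h2 : entry (Ymat N) (N-1) 0 = - Real.cos (Real.pi / N) := by
    rw [entry_eq _ _ _ (by omega) (by omega)]
    show Real.cos (((N-1:ℕ):ℝ) * (Real.pi/N)) * Real.cos (((0:ℕ):ℝ) * (Real.pi/N))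
      + Real.sin (((N-1:ℕ):ℝ) * (Real.pi/N)) * Real.sin (((0:ℕ):ℝ) * (Real.pi/N)) = _
    push_cast [Nat.cast_sub (by omega : 1 ≤ N)]
    rw [show ((N:ℝ)-1) * (Real.pi/N) = Real.pi - Real.pi/N by field_simp]
    rw [Real.cos_pi_sub]
    simp
  rw [h2]
  rw [nsmul_eq_mul, Nat.cast_sub (by omega : 1 ≤ N)]
  push_cast
  ring

lemma solve_coeffs (θ α β γ : ℝ) (hs1 : Real.sin θ ≠ 0) (hs2 : Real.sin (2*θ) ≠ 0)
    (hα : α = 1)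
    (h1 : α * Real.cos θ^2 + 2*β*(Real.cos θ)*(Real.sin θ) + γ * Real.sin θ^2 = 1)
    (h2 : α * Real.cos (2*θ)^2 + 2*β*(Real.cos (2*θ))*(Real.sin (2*θ)) + γ * Real.sin (2*θ)^2 = 1) :
    γ = 1 ∧ β = 0 := by
  subst hα
  have p1 := Real.sin_sq_add_cos_sq θ
  have p2 := Real.sin_sq_add_cos_sq (2*θ)
  have e1 : Real.sin θ * ((γ-1) * Real.sin θ + 2*β*Real.cos θ) = 0 := by nlinarith
  have e2 : Real.sin (2*θ) * ((γ-1) * Real.sin (2*θ) + 2*β*Real.cos (2*θ)) = 0 := by nlinarith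
  have u : (γ-1) * Real.sin θ + 2*β*Real.cos θ = 0 := by
    rcases mul_eq_zero.mp e1 with h | h
    · exact absurd h hs1
    · exact h
  have v : (γ-1) * Real.sin (2*θ) + 2*β*Real.cos (2*θ) = 0 := by
    rcases mul_eq_zero.mp e2 with h | h
    · exact absurd h hs2
    · exact h
  have hsin2 : Real.sin (2*θ) = 2 * Real.sin θ * Real.cos θ := Real.sin_two_mul θ
  have hcos2 : Real.cos (2*θ) = 2 * Real.cos θ^2 - 1 := Real.cos_two_mul θ
  rw [hsin2, hcos2] at v
  have hβ : β = 0 := by linear_combination (Real.cos θ) * u - (1/2) * v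
  constructor
  · have : (γ-1) * Real.sin θ = 0 := by rw [hβ] at u; linarith
    rcases mul_eq_zero.mp this with h | h
    · linarith
    · exact absurd h hs1
  · exact hβ

theorem cycle_sdp_unique_optimizer (N : ℕ) (hN : 3 ≤ N) :
    ∃! X : Matrix (Fin N) (Fin N) ℝ,
      X.PosSemidef ∧ (∀ i, X i i = 1) ∧
        cycObj N X = (N : ℝ) * Real.cos (Real.pi / N) := by
  have hN0 : 0 < N := by omega
  refine ⟨Ymat N, ⟨Ymat_posSemidef N, Ymat_diag N, Ymat_obj N hN⟩, ?_⟩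
  rintro X ⟨hpsd, hdiag, hobj⟩
  obtain ⟨S, hS2, hherm⟩ : ∃ S : Matrix (Fin N) (Fin N) ℝ, S * S = X ∧ S.IsHermitian := by
    open scoped MatrixOrder in
    exact ⟨CFC.sqrt X, CFC.sqrt_mul_sqrt_self X hpsd.nonneg, (CFC.sqrt_nonneg X).posSemidef.1⟩
  set r : Fin N → ℕ → ℝ := fun k j => if h : j < N then S k ⟨j, h⟩ else 0 with hrdef
  have hr : ∀ (k : Fin N) (j : ℕ) (hj : j < N), r k j = S k ⟨j, hj⟩ := fun k j hj => dif_pos hj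
  have hXr : ∀ (i j : ℕ) (hi : i < N) (hj : j < N),
      X ⟨i, hi⟩ ⟨j, hj⟩ = ∑ k : Fin N, r k i * r k j := by
    intro i j hi hj
    rw [← hS2, Matrix.mul_apply]
    refine Finset.sum_congr rfl fun k _ => ?_
    rw [hr k i hi, hr k j hj]
    congr 1
    exact (Matrix.IsHermitian.apply hherm ⟨i, hi⟩ k).symm
  have htrace : ∑ k : Fin N, (∑ j ∈ range N, (r k j)^2) = N := by
    have h1 : ∀ k : Fin N, ∑ j ∈ range N, (r k j)^2 = ∑ i : Fin N, (r k (i:ℕ))^2 :=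
      fun k => (Fin.sum_univ_eq_sum_range (fun j => (r k j)^2) N).symm
    rw [Finset.sum_congr rfl (fun k _ => h1 k), Finset.sum_comm]
    have h2 : ∀ i : Fin N, ∑ k : Fin N, (r k (i:ℕ))^2 = 1 := by
      intro i
      rw [← hdiag i]
      have := hXr i i i.isLt i.isLt
      simp only [Fin.eta] at this
      rw [this]
      exact Finset.sum_congr rfl fun k _ => pow_two _
    rw [Finset.sum_congr rfl (fun i _ => h2 i)]
    simp
  have hobj2 : cycObj N X = ∑ k : Fin N, qform N (r k) := by
    rw [cycObj]
    have e1 : ∀ i ∈ range (N-1), entry X i (i+1) = ∑ k : Fin N, r k i * r k (i+1) := by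
      intro i hi
      simp only [mem_range] at hi
      rw [entry_eq _ _ _ (by omega) (by omega)]
      exact hXr _ _ _ _
    have e2 : entry X (N-1) 0 = ∑ k : Fin N, r k (N-1) * r k 0 := by
      rw [entry_eq _ _ _ (by omega) hN0]
      exact hXr _ _ _ _
    rw [Finset.sum_congr rfl e1, e2, Finset.sum_comm, ← Finset.sum_sub_distrib]
    simp only [qform]
  have hle : ∀ k ∈ (Finset.univ : Finset (Fin N)),
      qform N (r k) ≤ Real.cos (Real.pi/N) * ∑ j ∈ range N, (r k j)^2 :=
    fun k _ => key_ineq N hN (r k)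
  have hsum : ∑ k : Fin N, qform N (r k)
      = ∑ k : Fin N, Real.cos (Real.pi/N) * ∑ j ∈ range N, (r k j)^2 := by
    rw [← hobj2, hobj, ← Finset.mul_sum, htrace]
    ring
  have heach := (Finset.sum_eq_sum_iff_of_le hle).mp hsum
  have hABex : ∀ k : Fin N, ∃ A B : ℝ, ∀ j < N,
      r k j = A * Real.cos (j * (Real.pi/N)) + B * Real.sin (j * (Real.pi/N)) :=
    fun k => eq_case N hN (r k) (heach k (Finset.mem_univ k))
  choose A B hAB using hABex
  set α := ∑ k : Fin N, A k * A k with hαdef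
  set β := ∑ k : Fin N, A k * B k with hβdef
  set γ := ∑ k : Fin N, B k * B k with hγdef
  have hX : ∀ (i j : ℕ) (hi : i < N) (hj : j < N), X ⟨i,hi⟩ ⟨j,hj⟩ =
      α * (Real.cos (i*(Real.pi/N)) * Real.cos (j*(Real.pi/N)))
      + β * (Real.cos (i*(Real.pi/N)) * Real.sin (j*(Real.pi/N))
             + Real.sin (i*(Real.pi/N)) * Real.cos (j*(Real.pi/N)))
      + γ * (Real.sin (i*(Real.pi/N)) * Real.sin (j*(Real.pi/N))) := by
    intro i j hi hj
    rw [hXr i j hi hj]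
    have hterm : ∀ k : Fin N, r k i * r k j =
        (A k * A k) * (Real.cos (i*(Real.pi/N)) * Real.cos (j*(Real.pi/N)))
        + (A k * B k) * (Real.cos (i*(Real.pi/N)) * Real.sin (j*(Real.pi/N))
             + Real.sin (i*(Real.pi/N)) * Real.cos (j*(Real.pi/N)))
        + (B k * B k) * (Real.sin (i*(Real.pi/N)) * Real.sin (j*(Real.pi/N))) := by
      intro k
      rw [hAB k i hi, hAB k j hj]
      ring
    rw [Finset.sum_congr rfl (fun k _ => hterm k), Finset.sum_add_distrib,
      Finset.sum_add_distrib, ← Finset.sum_mul, ← Finset.sum_mul, ← Finset.sum_mul]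
  have hpi := Real.pi_pos
  have hθpos : 0 < Real.pi/N := by positivity
  have hθlt : Real.pi/N ≤ Real.pi/3 := by
    apply div_le_div_of_nonneg_left hpi.le (by norm_num)
    exact_mod_cast hN
  have hs1 : Real.sin (Real.pi/N) ≠ 0 := by
    apply ne_of_gt
    apply Real.sin_pos_of_pos_of_lt_pi hθpos
    linarith
  have hs2 : Real.sin (2*(Real.pi/N)) ≠ 0 := by
    apply ne_of_gt
    apply Real.sin_pos_of_pos_of_lt_pi (by linarith)
    linarith
  have d0 := hdiag ⟨0, hN0⟩
  rw [hX 0 0 hN0 hN0] at d0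
  simp only [Nat.cast_zero, zero_mul, Real.cos_zero, Real.sin_zero, mul_one, mul_zero,
    add_zero, zero_add, one_mul] at d0
  have d1 := hdiag ⟨1, by omega⟩
  rw [hX 1 1 (by omega) (by omega)] at d1
  push_cast at d1
  have d2 := hdiag ⟨2, by omega⟩
  rw [hX 2 2 (by omega) (by omega)] at d2
  push_cast at d2
  have h1' : α * Real.cos (Real.pi/N)^2 + 2*β*(Real.cos (Real.pi/N))*(Real.sin (Real.pi/N))
      + γ * Real.sin (Real.pi/N)^2 = 1 := by
    rw [show (1:ℝ) * (Real.pi/N) = Real.pi/N by ring] at d1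
    linear_combination d1
  have h2' : α * Real.cos (2*(Real.pi/N))^2 + 2*β*(Real.cos (2*(Real.pi/N)))*(Real.sin (2*(Real.pi/N)))
      + γ * Real.sin (2*(Real.pi/N))^2 = 1 := by
    linear_combination d2
  obtain ⟨hγ, hβ⟩ := solve_coeffs (Real.pi/N) α β γ hs1 hs2 d0 h1' h2'
  ext i j
  have hij := hX i.val j.val i.isLt j.isLt
  simp only [Fin.eta] at hij
  rw [hij, hβ, hγ, d0]
  simp only [Ymat, Matrix.of_apply]
  ring
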